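/- Let Ω ⊂ ℝ^N be open and bounded with c ≤ z ≤ 1 on Ω for some c > 0, where z(x) = ∫_Ω η(x−y) dy, and let η ∈ C²_c(ℝ^N; ℝ₊) ∩ C¹. Then for every ρ ∈ L¹(Ω;ℝ), the gradient of the boundary-adapted convolution satisfies ‖∇(ρ ∗_Ω η)‖_{L^∞(Ω;ℝ^N)} ≤ ( ‖∇η‖_{L^∞}/c + ‖∇η‖_{L¹} ‖η‖_{L^∞}/c² ) ‖ρ‖_{L¹(Ω)}, using the identity ∇(ρ ∗_Ω η) = (1/z)((ρ 1_Ω) ∗ ∇η) − ((1_Ω ∗ ∇η)/z²)((ρ 1_Ω) ∗ η). -/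

import Mathlib

open MeasureTheory Set Metric
open scoped Convolution

set_option maxHeartbeats 1000000 in
theorem stmt4 (N : ℕ) (Ω : Set (EuclideanSpace ℝ (Fin N)))
    (hΩopen : IsOpen Ω) (hΩbdd : Bornology.IsBounded Ω)
    (η : EuclideanSpace ℝ (Fin N) → ℝ)
    (hη : ContDiff ℝ 2 η) (hηsupp : HasCompactSupport η) (hηnn : ∀ x, 0 ≤ η x)
    (c : ℝ) (hc : 0 < c)
    (hz : ∀ x ∈ Ω, c ≤ (∫ y in Ω, η (x - y)) ∧ (∫ y in Ω, η (x - y)) ≤ 1)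
    (ρ : EuclideanSpace ℝ (Fin N) → ℝ)
    (hρ : IntegrableOn ρ Ω) :
    ∀ x ∈ Ω,
      ‖fderiv ℝ
        (fun ξ => (1 / ∫ y in Ω, η (ξ - y)) * ∫ y in Ω, ρ y * η (ξ - y)) x‖ ≤
      ((⨆ ξ, ‖fderiv ℝ η ξ‖) / c +
        (∫ ξ, ‖fderiv ℝ η ξ‖) * (⨆ ξ, |η ξ|) / c ^ 2) * ∫ y in Ω, |ρ y| := by
  intro x hx
  have hΩm : MeasurableSet Ω := hΩopen.measurableSet
  set L : ℝ →L[ℝ] ℝ →L[ℝ] ℝ := ContinuousLinearMap.lsmul ℝ ℝ with hL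
  set f₁ : EuclideanSpace ℝ (Fin N) → ℝ := Ω.indicator ρ with hf₁def
  set f₂ : EuclideanSpace ℝ (Fin N) → ℝ := Ω.indicator (fun _ => (1:ℝ)) with hf₂def
  have hf₁i : Integrable f₁ := hρ.integrable_indicator hΩm
  have hf₂i : Integrable f₂ :=
    (integrableOn_const hΩbdd.measure_lt_top.ne).integrable_indicator hΩm
  -- convolution representations
  have e_g : ∀ ξ, (f₁ ⋆[L, volume] η) ξ = ∫ y in Ω, ρ y * η (ξ - y) := by
    intro ξ
    rw [convolution_def, ← integral_indicator hΩm]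
    congr 1; funext t
    by_cases ht : t ∈ Ω <;>
      simp [hf₁def, ht, indicator_of_mem, indicator_of_notMem, hL]
  have e_z : ∀ ξ, (f₂ ⋆[L, volume] η) ξ = ∫ y in Ω, η (ξ - y) := by
    intro ξ
    rw [convolution_def, ← integral_indicator hΩm]
    congr 1; funext t
    by_cases ht : t ∈ Ω <;>
      simp [hf₂def, ht, indicator_of_mem, indicator_of_notMem, hL]
  set Z : EuclideanSpace ℝ (Fin N) → ℝ := f₂ ⋆[L, volume] η with hZ
  set G : EuclideanSpace ℝ (Fin N) → ℝ := f₁ ⋆[L, volume] η with hG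
  have hZx_pos : (0:ℝ) < Z x := by
    rw [e_z]; exact lt_of_lt_of_le hc (hz x hx).1
  have hZx_ne : Z x ≠ 0 := ne_of_gt hZx_pos
  have hZc : c ≤ Z x := by rw [e_z]; exact (hz x hx).1
  -- derivatives
  have hG' : HasFDerivAt G ((f₁ ⋆[L.precompR (EuclideanSpace ℝ (Fin N)), volume] fderiv ℝ η) x) x :=
    hηsupp.hasFDerivAt_convolution_right L hf₁i.locallyIntegrable (hη.of_le one_le_two) x
  have hZ' : HasFDerivAt Z ((f₂ ⋆[L.precompR (EuclideanSpace ℝ (Fin N)), volume] fderiv ℝ η) x) x :=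
    hηsupp.hasFDerivAt_convolution_right L hf₂i.locallyIntegrable (hη.of_le one_le_two) x
  set G' := (f₁ ⋆[L.precompR (EuclideanSpace ℝ (Fin N)), volume] fderiv ℝ η) x with hG'def
  set Z' := (f₂ ⋆[L.precompR (EuclideanSpace ℝ (Fin N)), volume] fderiv ℝ η) x with hZ'def
  have hinv : HasFDerivAt (fun ξ => (Z ξ)⁻¹) ((-(Z x ^ 2)⁻¹) • Z') x :=
    (hasDerivAt_inv hZx_ne).comp_hasFDerivAt x hZ'
  have hF : HasFDerivAt (fun ξ => (Z ξ)⁻¹ * G ξ)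
      ((Z x)⁻¹ • G' + G x • ((-(Z x ^ 2)⁻¹) • Z')) x := hinv.mul hG'
  have efun : (fun ξ => (1 / ∫ y in Ω, η (ξ - y)) * ∫ y in Ω, ρ y * η (ξ - y))
      = fun ξ => (Z ξ)⁻¹ * G ξ := by
    funext ξ; rw [one_div, e_z, e_g]
  rw [efun, hF.fderiv]
  -- constants
  set Mgrad : ℝ := ⨆ ξ, ‖fderiv ℝ η ξ‖ with hMgraddef
  set Mη : ℝ := ⨆ ξ, |η ξ| with hMηdef
  set J : ℝ := ∫ ξ, ‖fderiv ℝ η ξ‖ with hJdef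
  set I : ℝ := ∫ y in Ω, |ρ y| with hIdef
  have hfdcont : Continuous (fderiv ℝ η) := hη.continuous_fderiv two_ne_zero
  have hfdsupp : HasCompactSupport (fderiv ℝ η) := hηsupp.fderiv (𝕜 := ℝ)
  have hbddgrad : BddAbove (range fun ξ => ‖fderiv ℝ η ξ‖) :=
    hfdcont.norm.bddAbove_range_of_hasCompactSupport hfdsupp.norm
  have hMgrad : ∀ ξ, ‖fderiv ℝ η ξ‖ ≤ Mgrad := fun ξ => le_ciSup hbddgrad ξ
  have hMgrad0 : 0 ≤ Mgrad := le_trans (norm_nonneg _) (hMgrad 0)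
  have hbddη : BddAbove (range fun ξ => |η ξ|) := by
    have := hη.continuous.norm.bddAbove_range_of_hasCompactSupport hηsupp.norm
    simpa [Real.norm_eq_abs] using this
  have hMη : ∀ ξ, |η ξ| ≤ Mη := fun ξ => le_ciSup hbddη ξ
  have hMη0 : 0 ≤ Mη := le_trans (abs_nonneg _) (hMη 0)
  have hJ0 : 0 ≤ J := integral_nonneg fun ξ => norm_nonneg _
  have hI0 : 0 ≤ I := integral_nonneg fun y => abs_nonneg _
  -- precompR pointwise
  have hpre : ∀ (a : ℝ) (v : EuclideanSpace ℝ (Fin N) →L[ℝ] ℝ), (L.precompR (EuclideanSpace ℝ (Fin N))) a v = a • v := by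
    intro a v; ext w
    simp [hL, ContinuousLinearMap.precompR_apply]
  -- |f₁| integral
  have habsf₁ : (fun t => |f₁ t|) = Ω.indicator (fun y => |ρ y|) := by
    funext t; by_cases ht : t ∈ Ω <;>
      simp [hf₁def, ht, indicator_of_mem, indicator_of_notMem]
  have hintf₁ : ∫ t, |f₁ t| = I := by
    rw [habsf₁, integral_indicator hΩm]
  -- bound on G'
  have normG : ‖G'‖ ≤ Mgrad * I := by
    rw [hG'def, convolution_def]
    calc ‖∫ t, (L.precompR (EuclideanSpace ℝ (Fin N))) (f₁ t) (fderiv ℝ η (x - t))‖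
        ≤ ∫ t, ‖(L.precompR (EuclideanSpace ℝ (Fin N))) (f₁ t) (fderiv ℝ η (x - t))‖ :=
          norm_integral_le_integral_norm _
      _ = ∫ t, |f₁ t| * ‖fderiv ℝ η (x - t)‖ := by
          congr 1; funext t; rw [hpre, norm_smul, Real.norm_eq_abs]
      _ ≤ ∫ t, |f₁ t| * Mgrad := by
          apply integral_mono_of_nonneg
          · exact Filter.Eventually.of_forall fun t =>
              mul_nonneg (abs_nonneg _) (norm_nonneg _)
          · exact hf₁i.abs.mul_const Mgrad
          · exact Filter.Eventually.of_forall fun t =>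
              mul_le_mul_of_nonneg_left (hMgrad (x - t)) (abs_nonneg _)
      _ = Mgrad * I := by rw [integral_mul_const, hintf₁, mul_comm]
  -- bound on Z'
  have hIntTrans : Integrable (fun t => ‖fderiv ℝ η (x - t)‖) := by
    exact (hfdcont.norm.integrable_of_hasCompactSupport hfdsupp.norm).comp_sub_left x
  have normZ : ‖Z'‖ ≤ J := by
    rw [hZ'def, convolution_def]
    calc ‖∫ t, (L.precompR (EuclideanSpace ℝ (Fin N))) (f₂ t) (fderiv ℝ η (x - t))‖
        ≤ ∫ t, ‖(L.precompR (EuclideanSpace ℝ (Fin N))) (f₂ t) (fderiv ℝ η (x - t))‖ :=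
          norm_integral_le_integral_norm _
      _ = ∫ t, |f₂ t| * ‖fderiv ℝ η (x - t)‖ := by
          congr 1; funext t; rw [hpre, norm_smul, Real.norm_eq_abs]
      _ ≤ ∫ t, ‖fderiv ℝ η (x - t)‖ := by
          apply integral_mono_of_nonneg
          · exact Filter.Eventually.of_forall fun t =>
              mul_nonneg (abs_nonneg _) (norm_nonneg _)
          · exact hIntTrans
          · refine Filter.Eventually.of_forall fun t => ?_
            have h2 : |f₂ t| ≤ 1 := by
              by_cases ht : t ∈ Ω <;>
                simp [hf₂def, ht, indicator_of_mem, indicator_of_notMem]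
            calc |f₂ t| * ‖fderiv ℝ η (x - t)‖ ≤ 1 * ‖fderiv ℝ η (x - t)‖ :=
                  mul_le_mul_of_nonneg_right h2 (norm_nonneg _)
              _ = ‖fderiv ℝ η (x - t)‖ := one_mul _
      _ = J := by
          rw [hJdef]
          exact integral_sub_left_eq_self (fun ξ => ‖fderiv ℝ η ξ‖) volume x
  -- bound on G x
  have normGx : |G x| ≤ Mη * I := by
    rw [e_g]
    calc |∫ y in Ω, ρ y * η (x - y)| = ‖∫ y in Ω, ρ y * η (x - y)‖ :=
          (Real.norm_eq_abs _).symm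
      _ ≤ ∫ y in Ω, ‖ρ y * η (x - y)‖ := norm_integral_le_integral_norm _
      _ ≤ ∫ y in Ω, |ρ y| * Mη := by
          apply integral_mono_of_nonneg
          · exact Filter.Eventually.of_forall fun y => norm_nonneg _
          · exact hρ.abs.mul_const Mη
          · refine Filter.Eventually.of_forall fun y => ?_
            show ‖ρ y * η (x - y)‖ ≤ |ρ y| * Mη
            rw [Real.norm_eq_abs, abs_mul]
            exact mul_le_mul_of_nonneg_left (hMη (x - y)) (abs_nonneg _)
      _ = Mη * I := by rw [integral_mul_const, mul_comm]
  -- final estimate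
  have h1 : ‖(Z x)⁻¹ • G'‖ ≤ c⁻¹ * (Mgrad * I) := by
    rw [norm_smul, Real.norm_eq_abs, abs_of_pos (inv_pos.2 hZx_pos)]
    exact mul_le_mul (inv_anti₀ hc hZc) normG (norm_nonneg _)
      (inv_nonneg.2 hc.le)
  have h2 : ‖G x • ((-(Z x ^ 2)⁻¹) • Z')‖ ≤ (Mη * I) * ((c ^ 2)⁻¹ * J) := by
    rw [norm_smul, norm_smul, Real.norm_eq_abs, Real.norm_eq_abs, abs_neg,
      abs_of_pos (inv_pos.2 (pow_pos hZx_pos 2))]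
    have hsq : (Z x ^ 2)⁻¹ ≤ (c ^ 2)⁻¹ :=
      inv_anti₀ (pow_pos hc 2) (pow_le_pow_left₀ hc.le hZc 2)
    exact mul_le_mul normGx
      (mul_le_mul hsq normZ (norm_nonneg _) (inv_nonneg.2 (pow_pos hc 2).le))
      (mul_nonneg (inv_nonneg.2 (pow_pos hZx_pos 2).le) (norm_nonneg _)) (mul_nonneg hMη0 hI0)
  calc ‖(Z x)⁻¹ • G' + G x • ((-(Z x ^ 2)⁻¹) • Z')‖
      ≤ ‖(Z x)⁻¹ • G'‖ + ‖G x • ((-(Z x ^ 2)⁻¹) • Z')‖ := norm_add_le _ _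
    _ ≤ c⁻¹ * (Mgrad * I) + (Mη * I) * ((c ^ 2)⁻¹ * J) := add_le_add h1 h2
    _ = (Mgrad / c + J * Mη / c ^ 2) * I := by ring
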